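/- Given any (possibly empty) collection {Ω_z}_{z∈Z} of segments and runs r_z ∈ Ω_z (one per segment), each player i has a strategy s_i such that: (a) every r_z is consistent with s_i, and (b) any run r along which player i is active infinitely often and which lies in no Ω_z is not consistent with s_i. -/
import Mathlib


/-- Stages: non-positive integers. -/
abbrev Stage : Type := {n : ℤ // n ≤ 0}

/-- A run assigns an action to each stage. -/
abbrev Run (A : Type) : Type := Stage → A

/-- A position at stage `n` records the actions at all stages `k < n`. -/
abbrev Position (A : Type) (n : ℤ) : Type := {k : ℤ // k < n} → A

/-- The space of all positions. -/
abbrev Pos (A : Type) : Type := Σ n : Stage, Position A n.1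

/-- The position induced by a run `r` at stage `n`. -/
def restrictRun {A : Type} (r : Run A) (n : Stage) : Position A n.1 :=
  fun k => r ⟨k.1, le_trans k.2.le n.2⟩

/-- A run `r` is consistent with a strategy `si` of player `i`: at every stage where `i` is the
active player along `r`, the action of `r` is the one recommended by `si`. -/
def ConsistentI {I A : Type} (ι : Pos A → I) (i : I) (si : Pos A → A) (r : Run A) : Prop :=
  ∀ n : Stage, ι ⟨n, restrictRun r n⟩ = i → r n = si ⟨n, restrictRun r n⟩

/-- A run `r` is consistent with a strategy profile `s`. -/
def ConsistentP {I A : Type} (ι : Pos A → I) (s : I → Pos A → A) (r : Run A) : Prop :=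
  ∀ n : Stage, r n = s (ι ⟨n, restrictRun r n⟩) ⟨n, restrictRun r n⟩

/-- Two runs differ in at most finitely many coordinates (same segment). -/
def FinDiff {A : Type} (r r' : Run A) : Prop := {k : Stage | r k ≠ r' k}.Finite

/-- Player `i` is active infinitely often along the run `r`. -/
def ActiveIO {I A : Type} (ι : Pos A → I) (i : I) (r : Run A) : Prop :=
  {n : Stage | ι ⟨n, restrictRun r n⟩ = i}.Infinite

/-- given a collection of segments, represented by one run `f z` per segment,
each player `i` has a strategy that (a) is consistent with every `f z`, and (b) is not
consistent with any run lying in none of these segments along which `i` is active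
infinitely often. -/
theorem strategy_permitting_exactly_given_segments (I A : Type) [Fintype I] [Nonempty I]
    [Fintype A] (hA : 2 ≤ Fintype.card A) (ι : Pos A → I)
    (Z : Type) (f : Z → Run A) (hone : ∀ z z' : Z, FinDiff (f z) (f z') → f z = f z')
    (i : I) :
    ∃ si : Pos A → A,
      (∀ z : Z, ConsistentI ι i si (f z)) ∧
      (∀ r : Run A, ActiveIO ι i r → (∀ z : Z, ¬ FinDiff r (f z)) →
        ¬ ConsistentI ι i si r) := by
  classical
  obtain ⟨a0, a1, hne⟩ := Fintype.exists_pair_of_one_lt_card (by omega : 1 < Fintype.card A)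
  -- the set of stages ≥ n is finite
  have hfin : ∀ n : Stage, ({k : Stage | ¬ k.1 < n.1}).Finite := by
    intro n
    have hsub : {k : Stage | ¬ k.1 < n.1} ⊆ Subtype.val ⁻¹' Set.Icc n.1 0 := by
      intro k hk
      simp only [Set.mem_preimage, Set.mem_Icc]
      exact ⟨by simpa using hk, k.2⟩
    exact ((Set.finite_Icc n.1 0).preimage (Subtype.val_injective.injOn)).subset hsub
  -- agreement of positions implies finite difference of runs
  have hposfin : ∀ (r r' : Run A) (n : Stage),
      restrictRun r n = restrictRun r' n → FinDiff r r' := by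
    intro r r' n h
    refine (hfin n).subset ?_
    intro k hk hklt
    exact hk (congrFun h ⟨k.1, hklt⟩)
  set AllOnes : Pos A → Prop := fun p =>
    ∀ k : Stage, ∀ hk : k.1 < p.1.1,
      ι ⟨k, fun j => p.2 ⟨j.1, lt_trans j.2 hk⟩⟩ = i → p.2 ⟨k.1, hk⟩ = a1 with hAOdef
  refine ⟨fun p => if h : ∃ z, p.2 = restrictRun (f z) p.1 then f h.choose p.1
    else (if AllOnes p then a0 else a1), ?_, ?_⟩
  · -- consistency with each f z
    intro z n _
    have hex : ∃ z', (restrictRun (f z) n : Position A n.1) = restrictRun (f z') n := ⟨z, rfl⟩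
    show f z n = _
    simp only [dif_pos hex]
    have hspec := hex.choose_spec
    have heq : f z = f hex.choose := hone _ _ (hposfin _ _ n hspec)
    exact congrFun heq n
  · -- no other run with i active infinitely often is consistent
    intro r hio hnof hcons
    have hoff : ∀ n : Stage, ¬ ∃ z, restrictRun r n = restrictRun (f z) n := by
      rintro n ⟨z, hz⟩
      exact hnof z (hposfin _ _ n hz)
    have key : ∀ n : Stage, ι ⟨n, restrictRun r n⟩ = i →
        r n = if AllOnes ⟨n, restrictRun r n⟩ then a0 else a1 := by
      intro n hn
      have h := hcons n hn
      simp only [dif_neg (hoff n)] at h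
      exact h
    have hAO_iff : ∀ n : Stage, AllOnes ⟨n, restrictRun r n⟩ ↔
        ∀ k : Stage, k.1 < n.1 → ι ⟨k, restrictRun r k⟩ = i → r k = a1 := by
      intro n
      constructor
      · intro h k hk hki; exact h k hk hki
      · intro h k hk hki; exact h k hk hki
    by_cases hcase : ∃ m : Stage, ι ⟨m, restrictRun r m⟩ = i ∧ AllOnes ⟨m, restrictRun r m⟩
    · obtain ⟨m, hmi, hmA⟩ := hcase
      -- find an i-active stage strictly before m
      have hns : ¬ {n : Stage | ι ⟨n, restrictRun r n⟩ = i} ⊆ {k : Stage | ¬ k.1 < m.1} :=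
        fun hsub => hio ((hfin m).subset hsub)
      obtain ⟨k, hki, hk⟩ := Set.not_subset.mp hns
      have hklt : k.1 < m.1 := not_not.mp hk
      have hk1 : r k = a1 := (hAO_iff m).mp hmA k hklt hki
      have hkey := key k hki
      by_cases hkA : AllOnes ⟨k, restrictRun r k⟩
      · rw [if_pos hkA] at hkey
        exact hne (hkey ▸ hk1)
      · have := (hAO_iff k).not.mp hkA
        push_neg at this
        obtain ⟨j, hjlt, hji, hj1⟩ := this
        exact hj1 ((hAO_iff m).mp hmA j (lt_trans hjlt hklt) hji)
    · push_neg at hcase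
      have hall : ∀ n : Stage, ι ⟨n, restrictRun r n⟩ = i → r n = a1 := by
        intro n hn
        have hkey := key n hn
        rwa [if_neg (hcase n hn)] at hkey
      obtain ⟨n, hn⟩ := hio.nonempty
      exact hcase n hn ((hAO_iff n).mpr fun k hk hki => hall k hki)
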